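/- With the setup of the main construction, for r_k ≤ x < a_k (k ≥ 1, so that x > 2a_j for j ≤ k-1) one has x·f'(x)/f(x) = 1 + ∑_{j=1}^∞ x/(x - a_j) ≤ -2 < 0. -/

import Mathlib

open Finset Metric Complex

/-- Monotonicity of the sequence `a`. -/
lemma stmt13_mono (C : ℝ) (a : ℕ → ℝ) (hC : 1 ≤ C)
    (hpos : ∀ k : ℕ, 1 ≤ k → 0 < a k)
    (harec : ∀ k : ℕ, 1 ≤ k → a (k+1) = 8 * C * a k * ∏ j ∈ Finset.Icc 1 (k-1), (a k / a j)) :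
    ∀ k : ℕ, ∀ j : ℕ, 1 ≤ j → j ≤ k → a j ≤ a k := by
  intro k
  induction k with
  | zero => intro j h1 h2; omega
  | succ n ih =>
    intro j h1 h2
    rcases Nat.lt_or_ge j (n+1) with hj | hj
    · rcases Nat.eq_zero_or_pos n with rfl | hn
      · omega
      have h3 : a j ≤ a n := ih j h1 (by omega)
      have hstep : a n ≤ a (n+1) := by
        rw [harec n hn]
        have hprod : (1:ℝ) ≤ ∏ j ∈ Finset.Icc 1 (n-1), (a n / a j) := by
          have h := Finset.prod_le_prod (s := Finset.Icc 1 (n-1)) (f := fun _ => (1:ℝ))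
            (g := fun j => a n / a j) (by intro i _; norm_num)
            (by intro i hi
                simp only [Finset.mem_Icc] at hi
                have hip : 0 < a i := hpos i hi.1
                have hle : a i ≤ a n := ih i hi.1 (by omega)
                show (1:ℝ) ≤ a n / a i
                rw [le_div_iff₀ hip]; linarith)
          simpa using h
        have hak : 0 < a n := hpos n hn
        have h5 : 8*C*a n ≤ 8*C*a n * ∏ j ∈ Finset.Icc 1 (n-1), (a n / a j) :=
          le_mul_of_one_le_right (by positivity) hprod
        nlinarith
      linarith
    · have hj' : j = n+1 := by omega
      simp [hj']

/-- The step inequality `8 C a_k ≤ a_{k+1}`. -/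
lemma stmt13_step (C : ℝ) (a : ℕ → ℝ) (hC : 1 ≤ C)
    (hpos : ∀ k : ℕ, 1 ≤ k → 0 < a k)
    (harec : ∀ k : ℕ, 1 ≤ k → a (k+1) = 8 * C * a k * ∏ j ∈ Finset.Icc 1 (k-1), (a k / a j)) :
    ∀ k : ℕ, 1 ≤ k → 8 * C * a k ≤ a (k+1) := by
  intro k hk
  rw [harec k hk]
  have hprod : (1:ℝ) ≤ ∏ j ∈ Finset.Icc 1 (k-1), (a k / a j) := by
    have h := Finset.prod_le_prod (s := Finset.Icc 1 (k-1)) (f := fun _ => (1:ℝ))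
      (g := fun j => a k / a j) (by intro i _; norm_num)
      (by intro i hi
          simp only [Finset.mem_Icc] at hi
          have hip : 0 < a i := hpos i hi.1
          have hle : a i ≤ a k := stmt13_mono C a hC hpos harec k i hi.1 (by omega)
          show (1:ℝ) ≤ a k / a i
          rw [le_div_iff₀ hip]; linarith)
    simpa using h
  have hak : 0 < a k := hpos k hk
  exact le_mul_of_one_le_right (by positivity) hprod

/-- Geometric growth `2^m a_k ≤ a_{k+m}`. -/
lemma stmt13_geo (C : ℝ) (a : ℕ → ℝ) (hC : 1 ≤ C)
    (hpos : ∀ k : ℕ, 1 ≤ k → 0 < a k)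
    (harec : ∀ k : ℕ, 1 ≤ k → a (k+1) = 8 * C * a k * ∏ j ∈ Finset.Icc 1 (k-1), (a k / a j)) :
    ∀ k : ℕ, 1 ≤ k → ∀ m : ℕ, 2^m * a k ≤ a (k+m) := by
  intro k hk m
  induction m with
  | zero => simp
  | succ n ih =>
    have h1 : 8 * C * a (k+n) ≤ a (k+n+1) := stmt13_step C a hC hpos harec (k+n) (by omega)
    have h2 : 0 < a (k+n) := hpos (k+n) (by omega)
    have h3 : (0:ℝ) < 2^n := by positivity
    have h4 : 0 < a k := hpos k hk
    calc (2:ℝ)^(n+1) * a k = 2 * (2^n * a k) := by ring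
    _ ≤ 2 * a (k+n) := by nlinarith
    _ ≤ a (k+n+1) := by nlinarith

set_option maxHeartbeats 2000000 in
/-- With the main construction, for C sufficiently large, k ≥ 1 and real x with
r_k ≤ x < a_k one has x·f'(x)/f(x) = 1 + ∑_j x/(x - a_j) ≤ -2 < 0. -/
theorem stmt13 : ∃ C0 : ℝ, ∀ C : ℝ, C0 ≤ C →
    ∀ a : ℕ → ℝ, (∀ k : ℕ, 1 ≤ k → 0 < a k) → a 1 = 1 →
    (∀ k : ℕ, 1 ≤ k → a (k+1) = 8 * C * a k * ∏ j ∈ Finset.Icc 1 (k-1), (a k / a j)) →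
    ∀ f : ℂ → ℂ, (∀ z, f z = C * z * ∏' i : ℕ, (1 - z / (a (i+1) : ℂ))) →
    ∀ k : ℕ, 1 ≤ k → ∀ x : ℝ,
      (2 * (k : ℝ) + 1) / (2 * (k : ℝ) + 2) * a k ≤ x → x < a k →
      f (x : ℂ) ≠ 0 →
      ((x : ℂ) * deriv f (x : ℂ) / f (x : ℂ) =
        1 + ∑' j : ℕ, (x : ℂ) / ((x : ℂ) - (a (j+1) : ℂ))) ∧
      ((x : ℂ) * deriv f (x : ℂ) / f (x : ℂ)).re ≤ -2 := by
  refine ⟨1, ?_⟩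
  intro C hC a hpos ha1 harec f hf k hk x hx1 hx2 hfx
  obtain ⟨m, rfl⟩ : ∃ m, k = m + 1 := ⟨k - 1, by omega⟩
  have hC0 : (0:ℝ) < C := lt_of_lt_of_le one_pos hC
  have hmono := stmt13_mono C a hC hpos harec
  have hstep := stmt13_step C a hC hpos harec
  have hgeo := stmt13_geo C a hC hpos harec
  have hak : 0 < a (m+1) := hpos _ (by omega)
  have hm0 : (0:ℝ) ≤ (m:ℝ) := Nat.cast_nonneg m
  -- rewrite hx1 cleanly
  have hden : (0:ℝ) < 2 * ((m+1:ℕ):ℝ) + 2 := by positivity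
  rw [div_mul_eq_mul_div, div_le_iff₀ hden] at hx1
  push_cast at hx1
  -- hx1 : (2 * (m+1) + 1) * a (m+1) ≤ x * (2 * (m+1) + 2)
  have hx0 : 0 < x := by nlinarith
  have hxhalf : a (m+1) ≤ 2 * x := by nlinarith
  have hstep1 : 8 * C * a (m+1) ≤ a (m+2) := hstep (m+1) (by omega)
  have h8 : 8 * a (m+1) ≤ a (m+2) := by nlinarith
  -- tail lower bounds
  have hA : ∀ n : ℕ, 0 < a (n+m+2) := fun n => hpos _ (by omega)
  have htail : ∀ n : ℕ, 2^n * a (m+2) ≤ a (n+m+2) := by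
    intro n
    have := hgeo (m+2) (by omega) n
    rwa [show m+2+n = n+m+2 by omega] at this
  have hAbig : ∀ n : ℕ, 2^n * (8 * a (m+1)) ≤ a (n+m+2) := by
    intro n
    have h1 := htail n
    have h3 : (0:ℝ) < 2^n := by positivity
    nlinarith
  -- the ball on which everything is nice
  set R : ℝ := 2 * a (m+1) with hR
  have hRpos : 0 < R := by positivity
  set t : Set ℂ := Metric.ball (0:ℂ) R with ht
  have hxt : (x:ℂ) ∈ t := by
    simp only [ht, Metric.mem_ball, dist_zero_right, Complex.norm_real, Real.norm_eq_abs,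
      abs_of_pos hx0]
    linarith
  have h0t : (0:ℂ) ∈ t := Metric.mem_ball_self hRpos
  -- bound on z / a_j for tail indices
  have hz4 : ∀ (n : ℕ) (z : ℂ), z ∈ t → ‖z / (a (n+m+2) : ℂ)‖ ≤ (1/4) * (1/2)^n := by
    intro n z hz
    have hzR : ‖z‖ < R := by simpa [ht, Metric.mem_ball, dist_zero_right] using hz
    have hAn := hA n
    have hbig := hAbig n
    have h2n : (0:ℝ) < 2^n := by positivity
    rw [norm_div, Complex.norm_real, Real.norm_eq_abs, abs_of_pos hAn]
    rw [div_le_iff₀ hAn]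
    have h1 : (1/4 : ℝ) * (1/2)^n * (2^n * (8 * a (m+1))) = R := by
      rw [hR, one_div_pow]; field_simp; ring
    calc ‖z‖ ≤ R := le_of_lt hzR
    _ = (1/4 : ℝ) * (1/2)^n * (2^n * (8 * a (m+1))) := h1.symm
    _ ≤ (1/4) * (1/2)^n * a (n+m+2) := by
        apply mul_le_mul_of_nonneg_left hbig (by positivity)
  have hre : ∀ (n : ℕ) (z : ℂ), z ∈ t → (1/2 : ℝ) ≤ (1 - z / (a (n+m+2) : ℂ)).re := by
    intro n z hz
    have h1 := hz4 n z hz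
    have h2 : (z / (a (n+m+2) : ℂ)).re ≤ ‖z / (a (n+m+2) : ℂ)‖ := Complex.re_le_norm _
    have h3 : ((1/2:ℝ))^n ≤ 1 := by
      apply pow_le_one₀ <;> norm_num
    simp only [Complex.sub_re, Complex.one_re]
    nlinarith
  have hne : ∀ (n : ℕ) (z : ℂ), z ∈ t → (1 - z / (a (n+m+2) : ℂ)) ≠ 0 := by
    intro n z hz h0
    have := hre n z hz
    rw [h0] at this
    simp at this
    linarith
  have hslit : ∀ (n : ℕ) (z : ℂ), z ∈ t → (1 - z / (a (n+m+2) : ℂ)) ∈ Complex.slitPlane := by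
    intro n z hz
    exact Or.inl (by linarith [hre n z hz])
  have hnorm_lb : ∀ (n : ℕ) (z : ℂ), z ∈ t → (1/2 : ℝ) ≤ ‖1 - z / (a (n+m+2) : ℂ)‖ := by
    intro n z hz
    exact le_trans (hre n z hz) (Complex.re_le_norm _)
  -- summability of logs on t
  have hlogsum : ∀ z ∈ t, Summable (fun n => Complex.log (1 - z / (a (n+m+2) : ℂ))) := by
    intro z hz
    apply Summable.of_norm_bounded (g := fun n => (3/8 : ℝ) * (1/2)^n)
    · exact (summable_geometric_two).mul_left _
    · intro n
      have h1 := hz4 n z hz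
      have h2 : ‖-(z / (a (n+m+2) : ℂ))‖ ≤ 1/2 := by
        rw [norm_neg]
        calc ‖z / (a (n+m+2) : ℂ)‖ ≤ (1/4) * (1/2)^n := h1
        _ ≤ (1/4) * 1 := by
            apply mul_le_mul_of_nonneg_left _ (by norm_num)
            apply pow_le_one₀ <;> norm_num
        _ ≤ 1/2 := by norm_num
      have h3 := Complex.norm_log_one_add_half_le_self h2
      rw [show (1 : ℂ) + -(z / (a (n+m+2) : ℂ)) = 1 - z / (a (n+m+2) : ℂ) by ring] at h3
      rw [norm_neg] at h3
      calc ‖Complex.log (1 - z / (a (n+m+2) : ℂ))‖ ≤ 3/2 * ‖z / (a (n+m+2) : ℂ)‖ := h3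
      _ ≤ 3/2 * ((1/4) * (1/2)^n) := by
          apply mul_le_mul_of_nonneg_left h1 (by norm_num)
      _ = (3/8 : ℝ) * (1/2)^n := by ring
  -- derivative bound
  have hu : Summable (fun n : ℕ => 2 / a (n+m+2)) := by
    have hgs : Summable (fun n : ℕ => (1 / (4 * a (m+1))) * (1/2:ℝ)^n) :=
      summable_geometric_two.mul_left _
    refine Summable.of_nonneg_of_le (fun n => div_nonneg (by norm_num) (hA n).le) (fun n => ?_) hgs
    · have hAn := hA n
      have hbig := hAbig n
      have h2n : (0:ℝ) < 2^n := by positivity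
      rw [div_le_iff₀ hAn]
      have key : (1 / (4 * a (m+1))) * (1/2)^n * (2^n * (8 * a (m+1))) = 2 := by
        rw [one_div_pow]; field_simp; ring
      calc (2:ℝ) = (1 / (4 * a (m+1))) * (1/2)^n * (2^n * (8 * a (m+1))) := key.symm
      _ ≤ (1 / (4 * a (m+1))) * (1/2)^n * a (n+m+2) := by
          apply mul_le_mul_of_nonneg_left hbig (by positivity)
  -- derivatives of the log terms
  have hgderiv : ∀ (n : ℕ) (z : ℂ), z ∈ t →
      HasDerivAt (fun w => Complex.log (1 - w / (a (n+m+2) : ℂ)))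
        (-(1/(a (n+m+2) : ℂ)) / (1 - z / (a (n+m+2) : ℂ))) z := by
    intro n z hz
    have h1 : HasDerivAt (fun w : ℂ => 1 - w / (a (n+m+2) : ℂ)) (-(1/(a (n+m+2) : ℂ))) z := by
      simpa using ((hasDerivAt_id z).div_const ((a (n+m+2) : ℂ))).const_sub 1
    exact h1.clog (hslit n z hz)
  have hgbound : ∀ (n : ℕ) (z : ℂ), z ∈ t →
      ‖-(1/(a (n+m+2) : ℂ)) / (1 - z / (a (n+m+2) : ℂ))‖ ≤ 2 / a (n+m+2) := by
    intro n z hz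
    have hAn := hA n
    have hlb := hnorm_lb n z hz
    have hnum : ‖-(1/(a (n+m+2) : ℂ))‖ = 1 / a (n+m+2) := by
      rw [norm_neg, norm_div, norm_one, Complex.norm_real, Real.norm_eq_abs, abs_of_pos hAn]
    rw [norm_div, hnum]
    have hden2 : (0:ℝ) < ‖1 - z / (a (n+m+2) : ℂ)‖ := by linarith
    rw [div_le_div_iff₀ hden2 hAn]
    calc 1 / a (n+m+2) * a (n+m+2) = 1 := by field_simp
    _ = 2 * (1/2 : ℝ) := by norm_num
    _ ≤ 2 * ‖1 - z / (a (n+m+2) : ℂ)‖ := by linarith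
  -- the log-sum function and its derivative
  set S : ℂ → ℂ := fun z => ∑' n : ℕ, Complex.log (1 - z / (a (n+m+2) : ℂ)) with hS_def
  have hg0 : Summable (fun n : ℕ => Complex.log (1 - (0:ℂ) / (a (n+m+2) : ℂ))) := by
    simpa using summable_zero
  have hS : HasDerivAt S
      (∑' n : ℕ, -(1/(a (n+m+2) : ℂ)) / (1 - (x:ℂ) / (a (n+m+2) : ℂ))) (x:ℂ) := by
    exact hasDerivAt_tsum_of_isPreconnected hu Metric.isOpen_ball
      (convex_ball (0:ℂ) R).isPreconnected hgderiv hgbound h0t hg0 hxt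
  -- exp of log-sum equals tail product on t
  have hTexp : ∀ z ∈ t, (∏' n : ℕ, (1 - z / (a (n+m+2) : ℂ))) = Complex.exp (S z) := by
    intro z hz
    have h := Complex.cexp_tsum_eq_tprod (ι := ℕ)
      (f := fun n => 1 - z / (a (n+m+2) : ℂ))
      (fun n => hne n z hz) (hlogsum z hz)
    exact h.symm
  have hMtail : ∀ z ∈ t, Multipliable (fun n : ℕ => 1 - z / (a (n+m+2) : ℂ)) := by
    intro z hz
    exact Complex.multipliable_of_summable_log (hlogsum z hz)
  -- split the full product
  have hsplit : ∀ z ∈ t, (∏' j : ℕ, (1 - z / (a (j+1) : ℂ))) =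
      (∏ j ∈ Finset.range (m+1), (1 - z / (a (j+1) : ℂ))) * Complex.exp (S z) := by
    intro z hz
    have hM : Multipliable (fun n : ℕ => 1 - z / (a ((n + (m+1)) + 1) : ℂ)) := hMtail z hz
    rw [← Multipliable.prod_mul_tprod_nat_mul' (f := fun j : ℕ => 1 - z / (a (j+1) : ℂ)) (k := m+1) hM]
    congr 1
    exact hTexp z hz
  -- the polynomial part and its properties
  set P : ℂ → ℂ := fun z => ∏ j ∈ Finset.range (m+1), (1 - z / (a (j+1) : ℂ)) with hP_def
  set G : ℂ → ℂ := fun z => (C:ℂ) * z * P z with hG_def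
  have heq : ∀ z ∈ t, f z = G z * Complex.exp (S z) := by
    intro z hz
    rw [hf z, hsplit z hz, hG_def, hP_def]
    ring
  have hfacdiff : ∀ j : ℕ, DifferentiableAt ℂ (fun z : ℂ => 1 - z / (a (j+1) : ℂ)) (x:ℂ) := by
    intro j
    exact (differentiableAt_id.div_const _).const_sub 1
  have hPdiff : DifferentiableAt ℂ P (x:ℂ) := by
    rw [hP_def]
    exact DifferentiableAt.fun_finsetProd (fun j _ => hfacdiff j)
  have hGdiff : DifferentiableAt ℂ G (x:ℂ) := by
    rw [hG_def]
    exact ((differentiableAt_const _).mul differentiableAt_id).mul hPdiff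
  have hG' : HasDerivAt G (deriv G (x:ℂ)) (x:ℂ) := hGdiff.hasDerivAt
  set S' : ℂ := ∑' n : ℕ, -(1/(a (n+m+2) : ℂ)) / (1 - (x:ℂ) / (a (n+m+2) : ℂ)) with hS'_def
  have hF : HasDerivAt (fun z => G z * Complex.exp (S z))
      (deriv G (x:ℂ) * Complex.exp (S (x:ℂ)) + G (x:ℂ) * (Complex.exp (S (x:ℂ)) * S')) (x:ℂ) :=
    hG'.mul hS.cexp
  have hfd : HasDerivAt f
      (deriv G (x:ℂ) * Complex.exp (S (x:ℂ)) + G (x:ℂ) * (Complex.exp (S (x:ℂ)) * S')) (x:ℂ) := by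
    apply hF.congr_of_eventuallyEq
    filter_upwards [Metric.isOpen_ball.mem_nhds hxt] with z hz
    exact heq z hz
  have hderivf : deriv f (x:ℂ) =
      deriv G (x:ℂ) * Complex.exp (S (x:ℂ)) + G (x:ℂ) * (Complex.exp (S (x:ℂ)) * S') := hfd.deriv
  -- basic nonvanishing facts
  have hfxval : f (x:ℂ) = G (x:ℂ) * Complex.exp (S (x:ℂ)) := heq (x:ℂ) hxt
  have hEx : Complex.exp (S (x:ℂ)) ≠ 0 := Complex.exp_ne_zero _
  have hGx : G (x:ℂ) ≠ 0 := by
    intro h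
    apply hfx
    rw [hfxval, h, zero_mul]
  have hxne : (x:ℂ) ≠ 0 := by
    simpa using ne_of_gt hx0
  -- each finite factor is nonzero, since x ≠ a_{j+1} for j ≤ m
  have hsmall : ∀ j : ℕ, j + 1 ≤ m → 4 * a (j+1) ≤ x := by
    intro j hj
    have hm1 : 1 ≤ m := le_trans (by omega) hj
    have h1 : a (j+1) ≤ a m := hmono m (j+1) (by omega) hj
    have h2 : 8 * C * a m ≤ a (m+1) := hstep m hm1
    have ham : 0 < a m := hpos m hm1
    nlinarith
  have hxlta : ∀ j : ℕ, j ∈ Finset.range (m+1) → x ≠ a (j+1) := by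
    intro j hj
    simp only [Finset.mem_range] at hj
    rcases Nat.lt_or_ge j m with h | h
    · have := hsmall j (by omega)
      have := hpos (j+1) (by omega)
      intro heq'
      nlinarith
    · have hjm : j = m := by omega
      subst hjm
      exact ne_of_lt hx2
  have hfacne : ∀ j ∈ Finset.range (m+1), (1 - (x:ℂ) / (a (j+1) : ℂ)) ≠ 0 := by
    intro j hj h0
    have haj : (a (j+1) : ℝ) ≠ 0 := ne_of_gt (hpos (j+1) (by omega))
    have hajc : ((a (j+1) : ℝ) : ℂ) ≠ 0 := by simpa using haj
    apply hxlta j hj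
    have h1 : (x:ℂ) = (a (j+1) : ℂ) := by
      field_simp at h0
      linear_combination -h0
    exact_mod_cast h1
  -- logarithmic derivative of the finite part
  have hPx : P (x:ℂ) ≠ 0 := by
    intro h
    apply hGx
    show (C:ℂ) * (x:ℂ) * P (x:ℂ) = 0
    rw [h, mul_zero]
  have hPlog : logDeriv P (x:ℂ) = ∑ j ∈ Finset.range (m+1), 1/((x:ℂ) - (a (j+1) : ℂ)) := by
    rw [hP_def]
    rw [logDeriv_prod (f := fun j (z : ℂ) => 1 - z / (a (j+1) : ℂ)) hfacne (fun j _ => hfacdiff j)]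
    apply Finset.sum_congr rfl
    intro j hj
    have haj : ((a (j+1):ℝ):ℂ) ≠ 0 := by exact_mod_cast ne_of_gt (hpos (j+1) (by omega))
    have hxaj : (x:ℂ) - (a (j+1):ℂ) ≠ 0 := by
      intro h
      exact hxlta j hj (by exact_mod_cast sub_eq_zero.mp h)
    have hd : HasDerivAt (fun z : ℂ => 1 - z/(a (j+1):ℂ)) (-(1/(a (j+1):ℂ))) (x:ℂ) := by
      simpa using ((hasDerivAt_id ((x:ℝ):ℂ)).div_const ((a (j+1):ℂ))).const_sub 1
    rw [logDeriv_apply, hd.deriv]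
    have hfne := hfacne j hj
    have hxaj' : (a (j+1):ℂ) - (x:ℂ) ≠ 0 := fun h => hxaj (by linear_combination -h)
    field_simp
    ring
  have hCne : (C:ℂ) ≠ 0 := by exact_mod_cast ne_of_gt hC0
  have hlogG : logDeriv G (x:ℂ) =
      1/(x:ℂ) + ∑ j ∈ Finset.range (m+1), 1/((x:ℂ) - (a (j+1) : ℂ)) := by
    have hGeq : G = fun z => (C:ℂ) * (z * P z) := by
      funext z
      show (C:ℂ) * z * P z = (C:ℂ) * (z * P z)
      ring
    rw [hGeq, logDeriv_const_mul _ _ hCne,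
      logDeriv_mul (f := fun z => z) (g := P) (x:ℂ) hxne hPx differentiableAt_id hPdiff, logDeriv_id', hPlog]
  -- x strictly below every tail point
  have hxltA : ∀ n : ℕ, x < a (n+m+2) := by
    intro n
    have hbig := hAbig n
    have h2n : (1:ℝ) ≤ 2^n := one_le_pow₀ (by norm_num)
    nlinarith
  -- summability of the real series
  have hsumR : Summable (fun j : ℕ => x / (x - a (j+1))) := by
    rw [← summable_nat_add_iff (m+1)]
    apply Summable.of_norm_bounded (g := fun n => (1/2:ℝ)^n) summable_geometric_two
    intro n
    show ‖x / (x - a (n+m+2))‖ ≤ (1/2:ℝ)^n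
    have hAn := hA n
    have hbig := hAbig n
    have hxa : x - a (n+m+2) < 0 := by linarith [hxltA n]
    have hp2 : (0:ℝ) < (1/2)^n := by positivity
    have hple1 : (1/2:ℝ)^n ≤ 1 := pow_le_one₀ (by norm_num) (by norm_num)
    have hpow : (1/2:ℝ)^n * 2^n = 1 := by
      rw [← mul_pow]; norm_num
    have hkey : 8 * a (m+1) ≤ (1/2)^n * a (n+m+2) := by
      calc 8 * a (m+1) = (1/2:ℝ)^n * (2^n * (8 * a (m+1))) := by
            rw [← mul_assoc, hpow, one_mul]
      _ ≤ (1/2)^n * a (n+m+2) := mul_le_mul_of_nonneg_left hbig hp2.le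
    rw [Real.norm_eq_abs, abs_div, abs_of_pos hx0, abs_of_neg hxa]
    rw [div_le_iff₀ (by linarith : (0:ℝ) < -(x - a (n+m+2)))]
    nlinarith [mul_le_mul_of_nonneg_right hple1 hx0.le]
  have hcast : ∀ j : ℕ, (x:ℂ)/((x:ℂ) - (a (j+1):ℂ)) = ((x / (x - a (j+1)) : ℝ) : ℂ) := by
    intro j
    push_cast
    ring
  have hsumC : Summable (fun j : ℕ => (x:ℂ)/((x:ℂ) - (a (j+1):ℂ))) := by
    simp only [hcast]
    exact Complex.summable_ofReal.mpr hsumR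
  -- pointwise identity for the tail terms
  have hterm : ∀ n : ℕ, (x:ℂ) * (-(1/(a (n+m+2):ℂ)) / (1 - (x:ℂ)/(a (n+m+2):ℂ))) =
      (x:ℂ)/((x:ℂ) - (a (n+m+2):ℂ)) := by
    intro n
    have hAn : ((a (n+m+2):ℝ):ℂ) ≠ 0 := by exact_mod_cast ne_of_gt (hA n)
    have hsub : (x:ℂ) - (a (n+m+2):ℂ) ≠ 0 := by
      intro h
      have h2 : (x:ℝ) = a (n+m+2) := by exact_mod_cast sub_eq_zero.mp h
      linarith [hxltA n]
    have hfac : (1 : ℂ) - (x:ℂ)/(a (n+m+2):ℂ) ≠ 0 := hne n _ hxt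
    have h9 : -(1/((a (n+m+2):ℝ):ℂ)) / (1 - (x:ℂ)/(a (n+m+2):ℂ))
        = 1/((x:ℂ) - (a (n+m+2):ℂ)) := by
      rw [div_eq_div_iff hfac hsub]
      field_simp
      ring
    rw [h9, mul_one_div]
  -- the main identity
  have hid : (x:ℂ) * deriv f (x:ℂ) / f (x:ℂ) =
      1 + ∑' j : ℕ, (x:ℂ)/((x:ℂ) - (a (j+1):ℂ)) := by
    rw [hderivf, hfxval]
    have e1 : (x:ℂ) * (deriv G (x:ℂ) * Complex.exp (S (x:ℂ)) +
        G (x:ℂ) * (Complex.exp (S (x:ℂ)) * S')) / (G (x:ℂ) * Complex.exp (S (x:ℂ)))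
        = (x:ℂ) * logDeriv G (x:ℂ) + (x:ℂ) * S' := by
      rw [logDeriv_apply]
      field_simp
    have e2 : (x:ℂ) * S' = ∑' n : ℕ, (x:ℂ)/((x:ℂ) - (a (n+m+2):ℂ)) := by
      rw [hS'_def, ← tsum_mul_left]
      exact tsum_congr hterm
    have e3 : (∑ j ∈ Finset.range (m+1), (x:ℂ)/((x:ℂ) - (a (j+1):ℂ))) +
        (∑' n : ℕ, (x:ℂ)/((x:ℂ) - (a (n+m+2):ℂ))) =
        ∑' j : ℕ, (x:ℂ)/((x:ℂ) - (a (j+1):ℂ)) :=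
      hsumC.sum_add_tsum_nat_add (m+1)
    rw [e1, hlogG, e2, ← e3]
    rw [mul_add, Finset.mul_sum]
    simp only [mul_one_div]
    rw [div_self hxne]
    ring
  refine ⟨hid, ?_⟩
  rw [hid]
  have hre_eq : (1 + ∑' j : ℕ, (x:ℂ)/((x:ℂ) - (a (j+1):ℂ))).re
      = 1 + ∑' j : ℕ, x/(x - a (j+1)) := by
    rw [tsum_congr hcast, ← Complex.ofReal_tsum]
    simp
  rw [hre_eq]
  -- the final numerical estimate
  have hsplitR : ∑' j : ℕ, x/(x - a (j+1)) =
      (∑ j ∈ Finset.range (m+1), x/(x - a (j+1))) + ∑' n : ℕ, x/(x - a (n+m+2)) :=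
    (hsumR.sum_add_tsum_nat_add (m+1)).symm
  have htail_np : ∑' n : ℕ, x/(x - a (n+m+2)) ≤ 0 := by
    apply tsum_nonpos
    intro n
    apply div_nonpos_of_nonneg_of_nonpos hx0.le
    linarith [hxltA n]
  have hfin : ∑ j ∈ Finset.range (m+1), x/(x - a (j+1)) ≤ 2*(m:ℝ) - (2*(m:ℝ)+3) := by
    rw [Finset.sum_range_succ]
    have hd : x - a (m+1) < 0 := by linarith
    have hlast : x/(x - a (m+1)) ≤ -(2*(m:ℝ)+3) := by
      rw [div_le_iff_of_neg hd]
      nlinarith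
    have hrest : ∑ j ∈ Finset.range m, x/(x - a (j+1)) ≤ 2*(m:ℝ) := by
      calc ∑ j ∈ Finset.range m, x/(x - a (j+1)) ≤ ∑ _j ∈ Finset.range m, (2:ℝ) := by
            apply Finset.sum_le_sum
            intro j hj
            simp only [Finset.mem_range] at hj
            have h4 := hsmall j (by omega)
            have haj := hpos (j+1) (by omega)
            rw [div_le_iff₀ (by linarith : (0:ℝ) < x - a (j+1))]
            linarith
      _ = 2*(m:ℝ) := by
            rw [Finset.sum_const, Finset.card_range]
            push_cast
            ring
    linarith
  rw [hsplitR]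
  linarith
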